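/- For every dimension vector d = (d_1,…,d_r) of positive integers with d_1+⋯+d_r = n, the matrix X(d) associated to the horizontal line diagram L_h(d) is a Richardson element for the standard parabolic subalgebra p(d) of sl_n(ℂ): the linear span of {[y, X(d)] : y ∈ p(d)} equals the nilradical n(d). -/

import Mathlib

open Matrix

def off (d : ℕ → ℕ) (c : ℕ) : ℕ := ∑ x ∈ Finset.range c, d x

/-- Lines of the horizontal line diagram `L_h(d)` (0-based labels, see the paper). -/
def IsHLine (d : ℕ → ℕ) (r : ℕ) (i j : ℕ) : Prop :=
  ∃ c c' k, c < c' ∧ c' < r ∧ k < d c ∧ k < d c' ∧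
    (∀ c'', c < c'' → c'' < c' → d c'' ≤ k) ∧ i = off d c + k ∧ j = off d c' + k

open Classical in
/-- The matrix `X(d) = Σ_{lines i—j} E_{ij}` of the horizontal line diagram `L_h(d)`. -/
noncomputable def XH (d : ℕ → ℕ) (r n : ℕ) : Matrix (Fin n) (Fin n) ℂ :=
  Matrix.of fun i j => if IsHLine d r (i : ℕ) (j : ℕ) then 1 else 0

/-- The (0-based) block index of a position `i` for the block sizes `d 0, …, d (r−1)`. -/
def blk (d : ℕ → ℕ) (r : ℕ) (i : ℕ) : ℕ :=
  ((Finset.range r).filter fun c => off d (c + 1) ≤ i).card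

/-- The standard parabolic subalgebra `p(d) ⊆ sl_n(ℂ)`: traceless block upper-triangular
matrices with diagonal blocks of sizes `d 0, …, d (r−1)`. -/
noncomputable def pSl (d : ℕ → ℕ) (r n : ℕ) : Submodule ℂ (Matrix (Fin n) (Fin n) ℂ) where
  carrier := {y | y.trace = 0 ∧
    ∀ i j : Fin n, blk d r (j : ℕ) < blk d r (i : ℕ) → y i j = 0}
  add_mem' := by
    rintro A B ⟨hA, hA'⟩ ⟨hB, hB'⟩
    refine ⟨by simp [trace_add, hA, hB], fun i j hij => by simp [hA' i j hij, hB' i j hij]⟩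
  zero_mem' := by simp
  smul_mem' := by
    rintro c A ⟨hA, hA'⟩
    exact ⟨by simp [hA], fun i j hij => by simp [hA' i j hij]⟩

/-- The nilradical `n(d)` of `p(d)`: strictly block upper-triangular matrices. -/
noncomputable def nSl (d : ℕ → ℕ) (r n : ℕ) : Submodule ℂ (Matrix (Fin n) (Fin n) ℂ) where
  carrier := {y | ∀ i j : Fin n, blk d r (j : ℕ) ≤ blk d r (i : ℕ) → y i j = 0}
  add_mem' := by
    intro A B hA hB i j hij
    simp [hA i j hij, hB i j hij]
  zero_mem' := by intro i j _; simp
  smul_mem' := by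
    intro c A hA i j hij
    simp [hA i j hij]

section helpers

variable {d : ℕ → ℕ} {r n : ℕ}

lemma off_succ (d : ℕ → ℕ) (c : ℕ) : off d (c+1) = off d c + d c := Finset.sum_range_succ d c

lemma off_mono (d : ℕ → ℕ) : Monotone (off d) := fun _ _ h =>
  Finset.sum_le_sum_of_subset (Finset.range_subset_range.2 h)

lemma blk_eq {c i : ℕ} (hc : c < r) (h1 : off d c ≤ i) (h2 : i < off d (c+1)) :
    blk d r i = c := by
  unfold blk
  have : (Finset.range r).filter (fun x => off d (x+1) ≤ i) = Finset.range c := by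
    ext x
    simp only [Finset.mem_filter, Finset.mem_range]
    constructor
    · rintro ⟨hxr, hx⟩
      by_contra hcx
      push_neg at hcx
      exact absurd (le_trans (off_mono d (by omega : c+1 ≤ x+1)) hx) (not_le.2 h2)
    · intro hx
      exact ⟨lt_trans hx hc, le_trans (off_mono d (by omega)) h1⟩
  rw [this, Finset.card_range]

lemma exists_blk {i : ℕ} (h : i < off d r) :
    ∃ c, c < r ∧ off d c ≤ i ∧ i < off d (c+1) := by
  induction r with
  | zero => simp [off] at h
  | succ r ih =>
    by_cases h' : i < off d r
    · obtain ⟨c, h1, h2, h3⟩ := ih h'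
      exact ⟨c, by omega, h2, h3⟩
    · exact ⟨r, by omega, by omega, h⟩

lemma blk_dot {c k : ℕ} (hc : c < r) (hk : k < d c) : blk d r (off d c + k) = c :=
  blk_eq hc (Nat.le_add_right _ _) (by rw [off_succ]; omega)

lemma dot_lt {c k : ℕ} (hc : c < r) (hk : k < d c) : off d c + k < off d r := by
  have h1 : off d c + k < off d (c+1) := by rw [off_succ]; omega
  exact lt_of_lt_of_le h1 (off_mono d hc)

lemma dot_inj {c k c' k' : ℕ} (hc : c < r) (hk : k < d c) (hc' : c' < r) (hk' : k' < d c')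
    (h : off d c + k = off d c' + k') : c = c' ∧ k = k' := by
  have h1 := blk_dot (d := d) hc hk
  have h2 := blk_dot (d := d) hc' hk'
  rw [h] at h1
  have hcc : c = c' := h1.symm.trans h2
  subst hcc
  omega

lemma line_right_unique {i j j' : ℕ} (h : IsHLine d r i j) (h' : IsHLine d r i j') : j = j' := by
  obtain ⟨c, c', k, hcc, hc'r, hk, hk', hgap, hi, hj⟩ := h
  obtain ⟨e, e', l, hee, he'r, hl, hl', hgap', hi', hj'⟩ := h'
  have hcr : c < r := lt_trans hcc hc'r
  have her : e < r := lt_trans hee he'r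
  obtain ⟨hce, hkl⟩ := dot_inj hcr hk her hl (hi ▸ hi')
  subst hce; subst hkl
  rcases lt_trichotomy c' e' with hlt | heq | hgt
  · exact absurd hk' (not_lt.2 (hgap' c' hcc hlt))
  · rw [hj, hj', heq]
  · exact absurd hl' (not_lt.2 (hgap e' hee hgt))

lemma line_left_unique {i i' j : ℕ} (h : IsHLine d r i j) (h' : IsHLine d r i' j) : i = i' := by
  obtain ⟨c, c', k, hcc, hc'r, hk, hk', hgap, hi, hj⟩ := h
  obtain ⟨e, e', l, hee, he'r, hl, hl', hgap', hi', hj'⟩ := h'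
  obtain ⟨hce, hkl⟩ := dot_inj hc'r hk' he'r hl' (hj ▸ hj')
  subst hce; subst hkl
  rcases lt_trichotomy c e with hlt | heq | hgt
  · exact absurd hl (not_lt.2 (hgap e hlt hee))
  · rw [hi, hi', heq]
  · exact absurd hk (not_lt.2 (hgap' c hgt hcc))

lemma line_blk_lt {i j : ℕ} (h : IsHLine d r i j) :
    blk d r i < blk d r j ∧ i < off d r ∧ j < off d r := by
  obtain ⟨c, c', k, hcc, hc'r, hk, hk', _, hi, hj⟩ := h
  have hcr : c < r := lt_trans hcc hc'r
  subst hi; subst hj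
  refine ⟨?_, dot_lt hcr hk, dot_lt hc'r hk'⟩
  rw [blk_dot hcr hk, blk_dot hc'r hk']
  exact hcc

open Classical in
lemma line_succ {c k : ℕ} (hk : k < d c)
    (h : ∃ x, c < x ∧ x < r ∧ k < d x) :
    ∃ c', c < c' ∧ c' < r ∧ k < d c' ∧ (∀ x, c < x → x < c' → d x ≤ k) ∧
      IsHLine d r (off d c + k) (off d c' + k) := by
  classical
  obtain ⟨h1, h2, h3⟩ := Nat.find_spec h
  have hgap : ∀ x, c < x → x < Nat.find h → d x ≤ k := by
    intro x hx1 hx2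
    by_contra hdx
    push_neg at hdx
    exact absurd (Nat.find_le ⟨hx1, lt_trans hx2 h2, hdx⟩) (not_le.2 hx2)
  exact ⟨Nat.find h, h1, h2, h3, hgap, c, Nat.find h, k, h1, h2, hk, h3, hgap, rfl, rfl⟩

open Classical in
lemma line_pred {c' k : ℕ} (hc' : c' < r) (hk' : k < d c')
    (h : ∃ x, x < c' ∧ k < d x) :
    ∃ c, c < c' ∧ k < d c ∧ (∀ x, c < x → x < c' → d x ≤ k) ∧
      IsHLine d r (off d c + k) (off d c' + k) := by
  classical
  obtain ⟨w, hw1, hw2⟩ := h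
  set c := Nat.findGreatest (fun x => k < d x) (c' - 1) with hcdef
  have hspec : k < d c :=
    Nat.findGreatest_spec (P := fun x => k < d x) (m := w) (by omega) hw2
  have hcle : c ≤ c' - 1 := Nat.findGreatest_le _
  have hclt : c < c' := by omega
  have hgap : ∀ x, c < x → x < c' → d x ≤ k := by
    intro x hx1 hx2
    by_contra hdx
    push_neg at hdx
    exact absurd hdx (Nat.findGreatest_is_greatest (P := fun x => k < d x) hx1 (by omega))
  exact ⟨c, hclt, hspec, hgap, c, c', k, hclt, hc', hspec, hk', hgap, rfl, rfl⟩

open Classical in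
lemma EX_entry (a j u v : Fin n) :
    (Matrix.single a j (1:ℂ) * XH d r n) u v =
      if u = a ∧ IsHLine d r (j:ℕ) (v:ℕ) then 1 else 0 := by
  classical
  rw [Matrix.mul_apply]
  rw [Finset.sum_eq_single j]
  · by_cases hu : u = a
    · subst hu
      simp [XH, Matrix.single_apply_same]
    · simp [Matrix.single, Ne.symm hu, hu]
  · intro k _ hk
    simp [Matrix.single, Ne.symm hk]
  · simp

open Classical in
lemma XE_entry (a j u v : Fin n) :
    (XH d r n * Matrix.single a j (1:ℂ)) u v =
      if v = j ∧ IsHLine d r (u:ℕ) (a:ℕ) then 1 else 0 := by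
  classical
  rw [Matrix.mul_apply]
  rw [Finset.sum_eq_single a]
  · by_cases hv : v = j
    · subst hv
      simp [XH, Matrix.single]
    · simp [Matrix.single, Ne.symm hv, hv]
  · intro k _ hk
    simp [XH, Matrix.single, hk, Ne.symm hk]
  · simp

lemma E_mem_p {a j : Fin n} (hne : a ≠ j) (hblk : blk d r (a:ℕ) ≤ blk d r (j:ℕ)) :
    Matrix.single a j (1:ℂ) ∈ pSl d r n := by
  constructor
  · exact Matrix.trace_single_eq_of_ne a j 1 hne
  · intro i k hik
    by_cases h : a = i ∧ j = k
    · obtain ⟨h1, h2⟩ := h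
      subst h1; subst h2
      omega
    · rw [Matrix.single]
      simp only [Matrix.of_apply]
      rw [if_neg h]

lemma diag_mem_p (a : Fin n) (hn : 0 < n) :
    Matrix.single a a (1:ℂ) - ((n:ℂ))⁻¹ • (1 : Matrix (Fin n) (Fin n) ℂ) ∈ pSl d r n := by
  constructor
  · rw [trace_sub, trace_smul, trace_one, Matrix.trace_single_eq_same]
    simp only [smul_eq_mul]
    rw [Fintype.card_fin]
    rw [inv_mul_cancel₀ (by exact_mod_cast hn.ne' : (n:ℂ) ≠ 0)]
    ring
  · intro i k hik
    have hik' : i ≠ k := by rintro rfl; omega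
    rw [Matrix.sub_apply, Matrix.smul_apply, Matrix.one_apply_ne hik']
    rw [Matrix.single]
    simp only [Matrix.of_apply]
    rw [if_neg (by rintro ⟨rfl, rfl⟩; exact hik' rfl)]
    simp

end helpers

lemma gen_main (d : ℕ → ℕ) (r n : ℕ) (hn : off d r = n) :
    ∀ N : ℕ, ∀ a b : Fin n,
      (if (a:ℕ) - off d (blk d r (a:ℕ)) < (b:ℕ) - off d (blk d r (b:ℕ))
        then n - (b:ℕ) else (a:ℕ)) < N →
      blk d r (a:ℕ) < blk d r (b:ℕ) →
      Matrix.single a b (1:ℂ) ∈ Submodule.span ℂ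
        {z : Matrix (Fin n) (Fin n) ℂ | ∃ y ∈ pSl d r n, z = y * XH d r n - XH d r n * y} := by
  intro N
  induction N with
  | zero => intro a b h _; omega
  | succ N ih =>
    intro a b hm hab
    classical
    -- decompose a
    have ha : (a:ℕ) < off d r := by rw [hn]; exact a.isLt
    obtain ⟨ca, hcar, ha1, ha2⟩ := exists_blk ha
    have hba : blk d r (a:ℕ) = ca := blk_eq hcar ha1 ha2
    have hka : (a:ℕ) - off d ca < d ca := by
      have := off_succ d ca; omega
    set ka := (a:ℕ) - off d ca with hka_def
    have haeq : (a:ℕ) = off d ca + ka := by omega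
    -- decompose b
    have hb : (b:ℕ) < off d r := by rw [hn]; exact b.isLt
    obtain ⟨cb, hcbr, hb1, hb2⟩ := exists_blk hb
    have hbb : blk d r (b:ℕ) = cb := blk_eq hcbr hb1 hb2
    have hkb : (b:ℕ) - off d cb < d cb := by
      have := off_succ d cb; omega
    set kb := (b:ℕ) - off d cb with hkb_def
    have hbeq : (b:ℕ) = off d cb + kb := by omega
    have hab' : ca < cb := by rwa [hba, hbb] at hab
    rw [hba, hbb, ← hka_def, ← hkb_def] at hm
    by_cases hcase : ka < kb
    · -- MOVE 2 : use succ a and succ b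
      rw [if_pos hcase] at hm
      obtain ⟨c', hlt', hc'r, hk', hgapS, hlineAS⟩ :=
        line_succ (r := r) hka ⟨cb, hab', hcbr, by omega⟩
      have hc'le : c' ≤ cb := by
        by_contra hgt
        push_neg at hgt
        exact absurd (hgapS cb hab' hgt) (by omega)
      have hsn : off d c' + ka < n := by rw [← hn]; exact dot_lt hc'r hk'
      set sf : Fin n := ⟨off d c' + ka, hsn⟩ with hsf
      have hsv : (sf:ℕ) = off d c' + ka := rfl
      have hlineAS' : IsHLine d r (a:ℕ) (sf:ℕ) := by rw [haeq]; exact hlineAS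
      have hsb : sf ≠ b := by
        intro hEQ
        have : (sf:ℕ) = (b:ℕ) := by rw [hEQ]
        obtain ⟨_, h2⟩ := dot_inj hc'r hk' hcbr hkb (by rw [hbeq] at this; exact this)
        omega
      have hy : Matrix.single sf b (1:ℂ) ∈ pSl d r n := by
        apply E_mem_p hsb
        have h1 : blk d r (sf:ℕ) = c' := blk_dot hc'r hk'
        rw [h1, hbb]; exact hc'le
      have hz : Matrix.single sf b (1:ℂ) * XH d r n - XH d r n * Matrix.single sf b 1 ∈
          Submodule.span ℂ {z : Matrix (Fin n) (Fin n) ℂ |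
            ∃ y ∈ pSl d r n, z = y * XH d r n - XH d r n * y} :=
        Submodule.subset_span ⟨_, hy, rfl⟩
      by_cases hsuccb : ∃ x, cb < x ∧ x < r ∧ kb < d x
      · -- succ b exists
        obtain ⟨c2, h2lt, h2r, hk2, _, hlineBT⟩ := line_succ (r := r) hkb hsuccb
        have htn : off d c2 + kb < n := by rw [← hn]; exact dot_lt h2r hk2
        set tf : Fin n := ⟨off d c2 + kb, htn⟩ with htf
        have htv : (tf:ℕ) = off d c2 + kb := rfl
        have hlineBT' : IsHLine d r (b:ℕ) (tf:ℕ) := by rw [hbeq]; exact hlineBT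
        have hclaim : Matrix.single a b (1:ℂ) = Matrix.single sf tf 1 -
            (Matrix.single sf b (1:ℂ) * XH d r n - XH d r n * Matrix.single sf b 1) := by
          ext u v
          rw [Matrix.sub_apply, Matrix.sub_apply, EX_entry, XE_entry]
          have c1 : (u = sf ∧ IsHLine d r (b:ℕ) (v:ℕ)) ↔ (sf = u ∧ tf = v) := by
            constructor
            · rintro ⟨rfl, hl⟩
              exact ⟨rfl, (Fin.ext (line_right_unique hlineBT' hl) : tf = v)⟩
            · rintro ⟨rfl, rfl⟩
              exact ⟨rfl, hlineBT'⟩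
          have c2' : (v = b ∧ IsHLine d r (u:ℕ) (sf:ℕ)) ↔ (a = u ∧ b = v) := by
            constructor
            · rintro ⟨rfl, hl⟩
              exact ⟨(Fin.ext (line_left_unique hlineAS' hl) : a = u), rfl⟩
            · rintro ⟨rfl, rfl⟩
              exact ⟨rfl, hlineAS'⟩
          rw [if_congr c1 rfl rfl, if_congr c2' rfl rfl]
          simp only [Matrix.single, Matrix.of_apply]
          ring
        rw [hclaim]
        refine Submodule.sub_mem _ ?_ hz
        -- E sf tf ∈ S by induction: its measure is n - tf < n - b ≤ N
        apply ih sf tf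
        · rw [hsv, htv, blk_dot hc'r hk', blk_dot h2r hk2]
          have hbt : (b:ℕ) < off d c2 + kb := by
            have h3 : off d (cb+1) ≤ off d c2 := off_mono d (by omega : cb + 1 ≤ c2)
            rw [off_succ] at h3
            omega
          rw [if_pos (by omega)]
          omega
        · rw [hsv, htv, blk_dot hc'r hk', blk_dot h2r hk2]
          omega
      · -- succ b does not exist : commutator is exactly -E a b
        have hnoline : ∀ v : Fin n, ¬ IsHLine d r (b:ℕ) (v:ℕ) := by
          intro v hl
          obtain ⟨c0, c1, k, h01, h1r, hk0, hk1, _, hbv, _⟩ := hl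
          have h0r : c0 < r := lt_trans h01 h1r
          obtain ⟨rfl, rfl⟩ := dot_inj hcbr hkb h0r hk0 (by rw [hbeq] at hbv; exact hbv)
          exact hsuccb ⟨c1, h01, h1r, hk1⟩
        have hclaim : Matrix.single a b (1:ℂ) =
            -(Matrix.single sf b (1:ℂ) * XH d r n - XH d r n * Matrix.single sf b 1) := by
          ext u v
          rw [Matrix.neg_apply, Matrix.sub_apply, EX_entry, XE_entry]
          rw [if_neg (fun h => hnoline v h.2)]
          have c2' : (v = b ∧ IsHLine d r (u:ℕ) (sf:ℕ)) ↔ (a = u ∧ b = v) := by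
            constructor
            · rintro ⟨rfl, hl⟩
              exact ⟨(Fin.ext (line_left_unique hlineAS' hl) : a = u), rfl⟩
            · rintro ⟨rfl, rfl⟩
              exact ⟨rfl, hlineAS'⟩
          rw [if_congr c2' rfl rfl]
          simp only [Matrix.single, Matrix.of_apply]
          ring
        rw [hclaim]
        exact Submodule.neg_mem _ hz
    · -- MOVE 1 : use pred b and pred a
      rw [if_neg hcase] at hm
      obtain ⟨c, hclt, hck, hgapP, hlinePB⟩ := line_pred hcbr hkb ⟨ca, hab', by omega⟩
      have hcac : ca ≤ c := by
        by_contra hlt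
        push_neg at hlt
        exact absurd (hgapP ca hlt hab') (by omega)
      have hcr : c < r := lt_trans hclt hcbr
      have hpn : off d c + kb < n := by rw [← hn]; exact dot_lt hcr hck
      set pf : Fin n := ⟨off d c + kb, hpn⟩ with hpf
      have hpv : (pf:ℕ) = off d c + kb := rfl
      have hlinePB' : IsHLine d r (pf:ℕ) (b:ℕ) := by rw [hbeq]; exact hlinePB
      -- pred a?
      by_cases hpreda : ∃ x, x < ca ∧ ka < d x
      · -- pred a exists, remainder term E qf pf (or E qf a in the diagonal case)
        obtain ⟨c0, h0lt, hk0, _, hlineQA⟩ := line_pred hcar hka hpreda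
        have h0r : c0 < r := lt_trans h0lt hcar
        have hqn : off d c0 + ka < n := by rw [← hn]; exact dot_lt h0r hk0
        set qf : Fin n := ⟨off d c0 + ka, hqn⟩ with hqf
        have hqv : (qf:ℕ) = off d c0 + ka := rfl
        have hlineQA' : IsHLine d r (qf:ℕ) (a:ℕ) := by rw [haeq]; exact hlineQA
        have hqa : (qf:ℕ) < (a:ℕ) := by
          rw [hqv, haeq]
          have h3 : off d (c0+1) ≤ off d ca := off_mono d (by omega : c0 + 1 ≤ ca)
          rw [off_succ] at h3
          omega
        have hihq : ∀ w : Fin n, (w:ℕ) = off d c + kb ∨ (w:ℕ) = (a:ℕ) →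
            blk d r (qf:ℕ) < blk d r (w:ℕ) →
            Matrix.single qf w (1:ℂ) ∈ Submodule.span ℂ
              {z : Matrix (Fin n) (Fin n) ℂ |
                ∃ y ∈ pSl d r n, z = y * XH d r n - XH d r n * y} := by
          intro w hw hblkw
          apply ih qf w ?_ hblkw
          have e1 : (qf:ℕ) - off d (blk d r (qf:ℕ)) = ka := by
            rw [hqv, blk_dot h0r hk0]; omega
          have e2 : (w:ℕ) - off d (blk d r (w:ℕ)) ≤ ka := by
            rcases hw with hw | hw
            · rw [hw, blk_dot hcr hck]; omega
            · rw [hw, hba]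
          rw [e1, if_neg (by omega)]
          omega
        by_cases hpa : (pf:ℕ) = (a:ℕ)
        · -- diagonal case : y = E a a - n⁻¹ • 1
          have hy := diag_mem_p (d := d) (r := r) a a.pos
          have hz : (Matrix.single a a (1:ℂ) - ((n:ℂ))⁻¹ • 1) * XH d r n -
              XH d r n * (Matrix.single a a (1:ℂ) - ((n:ℂ))⁻¹ • 1) ∈ Submodule.span ℂ
              {z : Matrix (Fin n) (Fin n) ℂ |
                ∃ y ∈ pSl d r n, z = y * XH d r n - XH d r n * y} :=
            Submodule.subset_span ⟨_, hy, rfl⟩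
          have hzeq : (Matrix.single a a (1:ℂ) - ((n:ℂ))⁻¹ • 1) * XH d r n -
              XH d r n * (Matrix.single a a (1:ℂ) - ((n:ℂ))⁻¹ • 1) =
              Matrix.single a a (1:ℂ) * XH d r n - XH d r n * Matrix.single a a 1 := by
            rw [Matrix.sub_mul, Matrix.mul_sub, Matrix.smul_mul, Matrix.mul_smul,
              one_mul, mul_one]
            abel
          rw [hzeq] at hz
          have hlineAB : IsHLine d r (a:ℕ) (b:ℕ) := by rw [← hpa]; exact hlinePB'
          have hclaim : Matrix.single a b (1:ℂ) =
              (Matrix.single a a (1:ℂ) * XH d r n - XH d r n * Matrix.single a a 1) +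
              Matrix.single qf a 1 := by
            ext u v
            rw [Matrix.add_apply, Matrix.sub_apply, EX_entry, XE_entry]
            have c1 : (u = a ∧ IsHLine d r (a:ℕ) (v:ℕ)) ↔ (a = u ∧ b = v) := by
              constructor
              · rintro ⟨rfl, hl⟩
                exact ⟨rfl, (Fin.ext (line_right_unique hlineAB hl) : b = v)⟩
              · rintro ⟨rfl, rfl⟩
                exact ⟨rfl, hlineAB⟩
            have c2' : (v = a ∧ IsHLine d r (u:ℕ) (a:ℕ)) ↔ (qf = u ∧ a = v) := by
              constructor
              · rintro ⟨rfl, hl⟩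
                exact ⟨(Fin.ext (line_left_unique hlineQA' hl) : qf = u), rfl⟩
              · rintro ⟨rfl, rfl⟩
                exact ⟨rfl, hlineQA'⟩
            rw [if_congr c1 rfl rfl, if_congr c2' rfl rfl]
            simp only [Matrix.single, Matrix.of_apply]
            ring
          rw [hclaim]
          refine Submodule.add_mem _ hz (hihq a (Or.inr rfl) ?_)
          rw [hqv, blk_dot h0r hk0, hba]
          omega
        · -- off-diagonal : y = E a pf
          have hy : Matrix.single a pf (1:ℂ) ∈ pSl d r n := by
            apply E_mem_p (fun h => hpa (by rw [h]))
            rw [hba, blk_dot hcr hck]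
            exact hcac
          have hz : Matrix.single a pf (1:ℂ) * XH d r n -
              XH d r n * Matrix.single a pf 1 ∈ Submodule.span ℂ
              {z : Matrix (Fin n) (Fin n) ℂ |
                ∃ y ∈ pSl d r n, z = y * XH d r n - XH d r n * y} :=
            Submodule.subset_span ⟨_, hy, rfl⟩
          have hclaim : Matrix.single a b (1:ℂ) =
              (Matrix.single a pf (1:ℂ) * XH d r n - XH d r n * Matrix.single a pf 1) +
              Matrix.single qf pf 1 := by
            ext u v
            rw [Matrix.add_apply, Matrix.sub_apply, EX_entry, XE_entry]
            have c1 : (u = a ∧ IsHLine d r (pf:ℕ) (v:ℕ)) ↔ (a = u ∧ b = v) := by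
              constructor
              · rintro ⟨rfl, hl⟩
                exact ⟨rfl, (Fin.ext (line_right_unique hlinePB' hl) : b = v)⟩
              · rintro ⟨rfl, rfl⟩
                exact ⟨rfl, hlinePB'⟩
            have c2' : (v = pf ∧ IsHLine d r (u:ℕ) (a:ℕ)) ↔ (qf = u ∧ pf = v) := by
              constructor
              · rintro ⟨rfl, hl⟩
                exact ⟨(Fin.ext (line_left_unique hlineQA' hl) : qf = u), rfl⟩
              · rintro ⟨rfl, rfl⟩
                exact ⟨rfl, hlineQA'⟩
            rw [if_congr c1 rfl rfl, if_congr c2' rfl rfl]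
            simp only [Matrix.single, Matrix.of_apply]
            ring
          rw [hclaim]
          refine Submodule.add_mem _ hz (hihq pf (Or.inl rfl) ?_)
          rw [hqv, hpv, blk_dot h0r hk0, blk_dot hcr hck]
          omega
      · -- pred a does not exist : commutator is exactly E a b
        have hnoline : ∀ u : Fin n, ¬ IsHLine d r (u:ℕ) (a:ℕ) := by
          intro u hl
          obtain ⟨c0, c1, k, h01, h1r, hk0, hk1, _, _, hav⟩ := hl
          obtain ⟨rfl, rfl⟩ := dot_inj hcar hka h1r hk1 (by rw [haeq] at hav; exact hav)
          exact hpreda ⟨c0, h01, hk0⟩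
        by_cases hpa : (pf:ℕ) = (a:ℕ)
        · -- diagonal exact case
          have hy := diag_mem_p (d := d) (r := r) a a.pos
          have hz : (Matrix.single a a (1:ℂ) - ((n:ℂ))⁻¹ • 1) * XH d r n -
              XH d r n * (Matrix.single a a (1:ℂ) - ((n:ℂ))⁻¹ • 1) ∈ Submodule.span ℂ
              {z : Matrix (Fin n) (Fin n) ℂ |
                ∃ y ∈ pSl d r n, z = y * XH d r n - XH d r n * y} :=
            Submodule.subset_span ⟨_, hy, rfl⟩
          have hzeq : (Matrix.single a a (1:ℂ) - ((n:ℂ))⁻¹ • 1) * XH d r n -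
              XH d r n * (Matrix.single a a (1:ℂ) - ((n:ℂ))⁻¹ • 1) =
              Matrix.single a a (1:ℂ) * XH d r n - XH d r n * Matrix.single a a 1 := by
            rw [Matrix.sub_mul, Matrix.mul_sub, Matrix.smul_mul, Matrix.mul_smul,
              one_mul, mul_one]
            abel
          rw [hzeq] at hz
          have hlineAB : IsHLine d r (a:ℕ) (b:ℕ) := by rw [← hpa]; exact hlinePB'
          have hclaim : Matrix.single a b (1:ℂ) =
              Matrix.single a a (1:ℂ) * XH d r n - XH d r n * Matrix.single a a 1 := by
            ext u v
            rw [Matrix.sub_apply, EX_entry, XE_entry]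
            have c1 : (u = a ∧ IsHLine d r (a:ℕ) (v:ℕ)) ↔ (a = u ∧ b = v) := by
              constructor
              · rintro ⟨rfl, hl⟩
                exact ⟨rfl, (Fin.ext (line_right_unique hlineAB hl) : b = v)⟩
              · rintro ⟨rfl, rfl⟩
                exact ⟨rfl, hlineAB⟩
            rw [if_congr c1 rfl rfl]
            rw [if_neg (show ¬(v = a ∧ IsHLine d r (u:ℕ) (a:ℕ)) from fun h => hnoline u h.2)]
            simp only [Matrix.single, Matrix.of_apply]
            ring
          rw [hclaim]
          exact hz
        · -- off-diagonal exact case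
          have hy : Matrix.single a pf (1:ℂ) ∈ pSl d r n := by
            apply E_mem_p (fun h => hpa (by rw [h]))
            rw [hba, blk_dot hcr hck]
            exact hcac
          have hz : Matrix.single a pf (1:ℂ) * XH d r n -
              XH d r n * Matrix.single a pf 1 ∈ Submodule.span ℂ
              {z : Matrix (Fin n) (Fin n) ℂ |
                ∃ y ∈ pSl d r n, z = y * XH d r n - XH d r n * y} :=
            Submodule.subset_span ⟨_, hy, rfl⟩
          have hclaim : Matrix.single a b (1:ℂ) =
              Matrix.single a pf (1:ℂ) * XH d r n - XH d r n * Matrix.single a pf 1 := by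
            ext u v
            rw [Matrix.sub_apply, EX_entry, XE_entry]
            have c1 : (u = a ∧ IsHLine d r (pf:ℕ) (v:ℕ)) ↔ (a = u ∧ b = v) := by
              constructor
              · rintro ⟨rfl, hl⟩
                exact ⟨rfl, (Fin.ext (line_right_unique hlinePB' hl) : b = v)⟩
              · rintro ⟨rfl, rfl⟩
                exact ⟨rfl, hlinePB'⟩
            rw [if_congr c1 rfl rfl]
            rw [if_neg (show ¬(v = pf ∧ IsHLine d r (u:ℕ) (a:ℕ)) from fun h => hnoline u h.2)]
            simp only [Matrix.single, Matrix.of_apply]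
            ring
          rw [hclaim]
          exact hz

/-- The matrix `X(d)` of the horizontal line diagram is a Richardson element for the
standard parabolic subalgebra `p(d)` of `sl_n(ℂ)`: it lies in the nilradical `n(d)` and
the linear span of `{[y, X(d)] : y ∈ p(d)}` equals `n(d)`. -/
theorem XH_is_richardson_sl (r n : ℕ) (d : ℕ → ℕ)
    (hd : ∀ c, c < r → 0 < d c) (hn : ∑ c ∈ Finset.range r, d c = n) :
    XH d r n ∈ nSl d r n ∧
    Submodule.span ℂ {z : Matrix (Fin n) (Fin n) ℂ |
        ∃ y ∈ pSl d r n, z = y * XH d r n - XH d r n * y} = nSl d r n := by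
  classical
  have hn' : off d r = n := hn
  constructor
  · intro i j hij
    have hnl : ¬ IsHLine d r (i:ℕ) (j:ℕ) := fun hl => absurd (line_blk_lt hl).1 (by omega)
    simp [XH, hnl]
  · apply le_antisymm
    · rw [Submodule.span_le]
      rintro z ⟨y, ⟨_, hyblk⟩, rfl⟩
      intro i j hij
      rw [Matrix.sub_apply, Matrix.mul_apply, Matrix.mul_apply]
      have h1 : ∑ k, y i k * XH d r n k j = 0 := by
        apply Finset.sum_eq_zero
        intro k _
        by_cases hl : IsHLine d r (k:ℕ) (j:ℕ)
        · have := (line_blk_lt hl).1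
          rw [hyblk i k (by omega), zero_mul]
        · have : XH d r n k j = 0 := by simp [XH, hl]
          rw [this, mul_zero]
      have h2 : ∑ k, XH d r n i k * y k j = 0 := by
        apply Finset.sum_eq_zero
        intro k _
        by_cases hl : IsHLine d r (i:ℕ) (k:ℕ)
        · have := (line_blk_lt hl).1
          rw [hyblk k j (by omega), mul_zero]
        · have : XH d r n i k = 0 := by simp [XH, hl]
          rw [this, zero_mul]
      rw [h1, h2, sub_zero]
    · intro y hy
      have hy' : ∀ i j : Fin n, blk d r (j:ℕ) ≤ blk d r (i:ℕ) → y i j = 0 := hy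
      rw [matrix_eq_sum_single y]
      apply Submodule.sum_mem
      intro i _
      apply Submodule.sum_mem
      intro j _
      by_cases h : blk d r (j:ℕ) ≤ blk d r (i:ℕ)
      · rw [hy' i j h]
        simp [Submodule.zero_mem]
      · have he : Matrix.single i j (y i j) = y i j • Matrix.single i j (1:ℂ) := by simp
        rw [he]
        refine Submodule.smul_mem _ _ (gen_main d r n hn' (n+1) i j ?_ (by omega))
        have := i.isLt
        split <;> omega
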